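/- Let T be a strongly connected tournament of order n with diameter d ≥ 6. If Ω(T) ≤ 2d − 6 (minimum size in arcs of a strong spanning subdigraph), then smc_v(T) = n − Ω_v(T) + 1, where Ω_v(T) is the minimum order of a strong, absorbing and dominating subdigraph of T. -/

import Mathlib

namespace SVMC

variable {V : Type*}

/-- `IsWalk A u v l` : `u :: l` is a directed walk from `u` to `v` in the digraph
with arc relation `A`; its length (number of arcs) is `l.length`. -/
def IsWalk (A : V → V → Prop) (u v : V) (l : List V) : Prop :=
  List.Chain A u l ∧ (u :: l).getLast (List.cons_ne_nil u l) = v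

/-- A directed path: a walk with no repeated vertices. -/
def IsPath (A : V → V → Prop) (u v : V) (l : List V) : Prop :=
  IsWalk A u v l ∧ (u :: l).Nodup

def Reachable (A : V → V → Prop) (u v : V) : Prop := ∃ l, IsWalk A u v l

/-- A digraph is strong if every vertex is reachable from every other vertex. -/
def Strong (A : V → V → Prop) : Prop := ∀ u v : V, Reachable A u v

/-- Directed distance: the minimum length of a directed walk from `u` to `v`. -/
noncomputable def dist (A : V → V → Prop) (u v : V) : ℕ :=
  sInf {n | ∃ l, IsWalk A u v l ∧ l.length = n}

/-- Diameter: maximum directed distance over ordered pairs of vertices. -/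
noncomputable def diam (A : V → V → Prop) : ℕ :=
  sSup {d | ∃ u v : V, dist A u v = d}

/-- The internal vertices of the walk `u :: l` (ending at the last entry of `l`)
are `l.dropLast`.  `MonoInternal Γ l` says they all receive one color. -/
def MonoInternal (Γ : V → ℕ) (l : List V) : Prop :=
  ∃ c, ∀ x ∈ l.dropLast, Γ x = c

/-- A strong vertex-monochromatic connection coloring. -/
def IsSVMC (A : V → V → Prop) (Γ : V → ℕ) : Prop :=
  ∀ u v : V, ∃ l, IsPath A u v l ∧ MonoInternal Γ l

/-- The number of colors used by a vertex coloring. -/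
noncomputable def colorCount (Γ : V → ℕ) : ℕ := (Set.range Γ).ncard

/-- The strong vertex-monochromatic connection number. -/
noncomputable def smcv (A : V → V → Prop) : ℕ :=
  sSup {k | ∃ Γ : V → ℕ, IsSVMC A Γ ∧ colorCount Γ = k}

def TotalAbsorbing (A : V → V → Prop) (S : Set V) : Prop := ∀ v : V, ∃ w ∈ S, A v w

def TotalDominating (A : V → V → Prop) (S : Set V) : Prop := ∀ v : V, ∃ w ∈ S, A w v

def Absorbing (A : V → V → Prop) (S : Set V) : Prop := ∀ v ∉ S, ∃ w ∈ S, A v w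

def Dominating (A : V → V → Prop) (S : Set V) : Prop := ∀ v ∉ S, ∃ w ∈ S, A w v

/-- A walk all of whose vertices lie in `S`. -/
def IsWalkIn (A : V → V → Prop) (S : Set V) (u v : V) (l : List V) : Prop :=
  IsWalk A u v l ∧ ∀ x ∈ u :: l, x ∈ S

/-- The subdigraph induced by `S` is strongly connected. -/
def StrongOn (A : V → V → Prop) (S : Set V) : Prop :=
  ∀ u ∈ S, ∀ v ∈ S, ∃ l, IsWalkIn A S u v l

/-- `Ω_v(D)`: minimum order of a strong, absorbing and dominating subdigraph. -/
noncomputable def Omegav (A : V → V → Prop) : ℕ :=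
  sInf {k | ∃ S : Set V, S.Nonempty ∧ StrongOn A S ∧ Absorbing A S ∧
    Dominating A S ∧ S.ncard = k}

/-- A directed cycle through `u` with vertex list `u :: l` (length `l.length`). -/
def IsCycle (A : V → V → Prop) (u : V) (l : List V) : Prop :=
  l ≠ [] ∧ IsWalk A u u l ∧ (u :: l.dropLast).Nodup

/-- The girth: minimum length of a directed cycle. -/
noncomputable def girth (A : V → V → Prop) : ℕ :=
  sInf {n | ∃ u l, IsCycle A u l ∧ l.length = n}

/-- The arcs of the walk `u :: l` are the consecutive pairs, i.e. `(u :: l).zip l`.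
`MonoArcs` says they all get one color under the arc coloring `ΓA`. -/
def MonoArcs (ΓA : V → V → ℕ) (u : V) (l : List V) : Prop :=
  ∃ c, ∀ p ∈ (u :: l).zip l, ΓA p.1 p.2 = c

/-- A strong monochromatic connection (arc) coloring. -/
def IsSMC (A : V → V → Prop) (ΓA : V → V → ℕ) : Prop :=
  ∀ u v : V, ∃ l, IsPath A u v l ∧ MonoArcs ΓA u l

/-- The number of colors used on the arcs. -/
noncomputable def arcColorCount (A : V → V → Prop) (ΓA : V → V → ℕ) : ℕ :=
  ((fun p : V × V => ΓA p.1 p.2) '' {p : V × V | A p.1 p.2}).ncard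

/-- The strong monochromatic connection number (arc version). -/
noncomputable def smc (A : V → V → Prop) : ℕ :=
  sSup {k | ∃ ΓA : V → V → ℕ, IsSMC A ΓA ∧ arcColorCount A ΓA = k}

/-- The number of arcs of a digraph. -/
noncomputable def arcCount (A : V → V → Prop) : ℕ := {p : V × V | A p.1 p.2}.ncard

/-- `Ω(D)`: minimum number of arcs of a strong spanning subdigraph. -/
noncomputable def Omega (A : V → V → Prop) : ℕ :=
  sInf {k | ∃ B : V → V → Prop, (∀ u v, B u v → A u v) ∧ Strong B ∧ arcCount B = k}

/-- The arcs of `A`, as the vertex type of the line digraph. -/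
def Arc (A : V → V → Prop) : Type _ := {p : V × V // A p.1 p.2}

/-- Adjacency in the line digraph: head of `e` equals tail of `f`. -/
def lineAdj (A : V → V → Prop) : Arc A → Arc A → Prop :=
  fun e f => e.1.2 = f.1.1

/-- `(u,v)` is a bad pair: `N⁺(u) = {v}` and `N⁻(v) = {u}`. -/
def BadPair (A : V → V → Prop) (u v : V) : Prop :=
  {w | A u w} = {v} ∧ {w | A w v} = {u}

/-- A tournament: an orientation of a complete graph. -/
def IsTournament (A : V → V → Prop) : Prop :=
  (∀ v, ¬ A v v) ∧ ∀ u v : V, u ≠ v → (A u v ↔ ¬ A v u)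

/-- The directed 3-cycle on `Fin 3`. -/
def C3Adj : Fin 3 → Fin 3 → Prop := fun i j => j = i + 1

/-- `A` is isomorphic to the directed 3-cycle. -/
def IsoC3 (A : V → V → Prop) : Prop :=
  ∃ e : V ≃ Fin 3, ∀ u v : V, A u v ↔ C3Adj (e u) (e v)

end SVMC
namespace SVMC

variable {V : Type*} {A : V → V → Prop} {u v w : V} {l m : List V}


lemma isWalk_nil : IsWalk A u u [] := ⟨List.Chain.nil, rfl⟩

lemma isWalk_single (h : A u v) : IsWalk A u v [v] := ⟨List.chain_cons.2 ⟨h, List.Chain.nil⟩, rfl⟩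

lemma IsWalk.getLast_cons (hw : IsWalk A u v l) : (u :: l).getLast (List.cons_ne_nil u l) = v := hw.2

lemma getLast_cons_of_ne_nil (hl : l ≠ []) (u : V) :
    (u :: l).getLast (List.cons_ne_nil u l) = l.getLast hl := by
  rw [List.getLast_cons hl]

lemma IsWalk.eq_of_nil (hw : IsWalk A u v []) : u = v := hw.2

lemma chain_split_aux {b : V} : ∀ {a : V} {l₁ l₂ : List V},
    List.Chain A a (l₁ ++ b :: l₂) ↔ List.Chain A a (l₁ ++ [b]) ∧ List.Chain A b l₂
  | a, [], l₂ => by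
    simp only [List.nil_append]
    exact ⟨fun h => ⟨List.chain_cons.2 ⟨(List.chain_cons.1 h).1, List.Chain.nil⟩, (List.chain_cons.1 h).2⟩,
      fun h => List.chain_cons.2 ⟨(List.chain_cons.1 h.1).1, h.2⟩⟩
  | a, c :: l₁, l₂ => by
    simp only [List.cons_append]
    constructor
    · intro h
      have h' := List.chain_cons.1 h
      have := (chain_split_aux (a := c) (l₁ := l₁) (l₂ := l₂)).1 h'.2
      exact ⟨List.chain_cons.2 ⟨h'.1, this.1⟩, this.2⟩
    · intro h
      have h' := List.chain_cons.1 h.1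
      exact List.chain_cons.2 ⟨h'.1, (chain_split_aux (a := c) (l₁ := l₁) (l₂ := l₂)).2 ⟨h'.2, h.2⟩⟩

lemma IsWalk.append (h1 : IsWalk A u v l) (h2 : IsWalk A v w m) : IsWalk A u w (l ++ m) := by
  rcases h2 with ⟨c2, g2⟩
  rcases h1 with ⟨c1, g1⟩
  rcases m with _ | ⟨b, m⟩
  · have hvw : v = w := by simpa using g2
    subst hvw
    exact ⟨by simpa using c1, by simpa using g1⟩
  · have hv : v = b ∨ A v b := by
      have := List.chain_cons.1 c2
      exact Or.inr this.1
    constructor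
    · -- chain A u (l ++ b :: m)
      rw [chain_split_aux (l₁ := l) (l₂ := m)]
      refine ⟨?_, (List.chain_cons.1 c2).2⟩
      -- chain A u (l ++ [b])
      have hb : A v b := (List.chain_cons.1 c2).1
      -- induction on l with chain c1 and getLast g1
      clear c2 g2
      induction l generalizing u with
      | nil => simp at g1; subst g1; exact List.chain_cons.2 ⟨hb, List.Chain.nil⟩
      | cons a l ih =>
        replace c1 := List.chain_cons.1 c1
        rw [List.cons_append]; apply List.chain_cons.2
        refine ⟨c1.1, ih c1.2 ?_⟩
        rw [← g1, List.getLast_cons (List.cons_ne_nil a l)]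
    · rw [List.getLast_cons (by simp : l ++ b :: m ≠ []), List.getLast_append_of_ne_nil _ (List.cons_ne_nil b m)]
      rw [← g2, List.getLast_cons (List.cons_ne_nil b m)]

lemma IsWalk.head_arc (hw : IsWalk A u v l) (hl : l ≠ []) : A u (l.head hl) := by
  rcases l with _ | ⟨a, l⟩
  · exact absurd rfl hl
  · exact (List.chain_cons.1 hw.1).1

lemma IsWalk.tail (hw : IsWalk A u v l) (hl : l ≠ []) : IsWalk A (l.head hl) v l.tail := by
  rcases l with _ | ⟨a, l⟩
  · exact absurd rfl hl
  · exact ⟨(List.chain_cons.1 hw.1).2, by rw [← hw.2]; simp [getLast_cons_of_ne_nil]⟩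

lemma chain_append_single_left : ∀ {m : List V} {a x : V}, List.Chain A a (m ++ [x]) → List.Chain A a m
  | [], _, _, _ => List.Chain.nil
  | b :: m, a, x, h => by
    rw [List.cons_append] at h; replace h := List.chain_cons.1 h
    exact List.chain_cons.2 ⟨h.1, chain_append_single_left (show List.Chain A b (m ++ [x]) from h.2)⟩

lemma chain_last_arc : ∀ {m : List V} {a x : V}, List.Chain A a (m ++ [x]) →
    A ((a :: m).getLast (List.cons_ne_nil a m)) x
  | [], a, x, h => by simpa using (List.chain_cons.1 (show List.Chain A a (x :: []) by simpa using h)).1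
  | b :: m, a, x, h => by
    rw [List.cons_append] at h; replace h := List.chain_cons.1 h
    simpa [List.getLast_cons] using chain_last_arc (show List.Chain A b (m ++ [x]) from h.2)

lemma IsWalk.dropLast (hw : IsWalk A u v l) (hl : l.dropLast ≠ []) :
    IsWalk A u (l.dropLast.getLast hl) l.dropLast := by
  have hlne : l ≠ [] := by rintro rfl; simp at hl
  have hdg : l.dropLast ++ [l.getLast hlne] = l := List.dropLast_append_getLast hlne
  have c := hw.1
  conv at c => rw [← hdg]
  exact ⟨chain_append_single_left c, getLast_cons_of_ne_nil hl u⟩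

lemma IsWalk.secondLast_arc (hw : IsWalk A u v l) (hl : l ≠ []) :
    A ((u :: l.dropLast).getLast (List.cons_ne_nil _ _)) v := by
  have hdg : l.dropLast ++ [l.getLast hl] = l := List.dropLast_append_getLast hl
  have hv : l.getLast hl = v := by
    rw [← hw.2, getLast_cons_of_ne_nil hl]
  have c := hw.1
  conv at c => rw [← hdg]
  rw [hv] at c
  exact chain_last_arc c

lemma walk_to_path : ∀ (n : ℕ) (l : List V), l.length ≤ n → ∀ (u v : V), IsWalk A u v l →
    ∃ l', IsPath A u v l' ∧ ∀ x ∈ u :: l', x ∈ u :: l := by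
  intro n
  induction n with
  | zero =>
    intro l hl u v hw
    have : l = [] := List.length_eq_zero_iff.1 (Nat.le_zero.1 hl)
    subst this
    exact ⟨[], ⟨hw, by simp⟩, by simp⟩
  | succ n ih =>
    intro l hl u v hw
    by_cases hu : u ∈ l
    · obtain ⟨l₁, l₂, rfl⟩ := List.append_of_mem hu
      have c := hw.1
      rw [chain_split_aux] at c
      have g : (u :: l₂).getLast (List.cons_ne_nil u l₂) = v := by
        rw [← hw.2]
        rcases l₂ with _ | ⟨b, l₂⟩
        · simp [List.getLast_append]
        · rw [getLast_cons_of_ne_nil (l := l₁ ++ u :: b :: l₂) (by simp),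
            List.getLast_append_of_ne_nil _ (List.cons_ne_nil u (b :: l₂)),
            getLast_cons_of_ne_nil (List.cons_ne_nil b l₂)]
      have hw2 : IsWalk A u v l₂ := ⟨c.2, g⟩
      have hlen : l₂.length ≤ n := by
        have := hl; simp [List.length_append] at this; omega
      obtain ⟨l', hp, hsub⟩ := ih l₂ hlen u v hw2
      exact ⟨l', hp, fun x hx => by
        have := hsub x hx
        simp at this ⊢
        tauto⟩
    · rcases l with _ | ⟨a, l⟩
      · exact ⟨[], ⟨hw, by simp⟩, by simp⟩
      · have hw2 : IsWalk A a v l := ⟨(List.chain_cons.1 hw.1).2, by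
          rw [← hw.2, getLast_cons_of_ne_nil (List.cons_ne_nil a l)]⟩
        obtain ⟨l', hp, hsub⟩ := ih l (by simpa using hl) a v hw2
        refine ⟨a :: l', ⟨⟨List.chain_cons.2 ⟨(List.chain_cons.1 hw.1).1, hp.1.1⟩, by
          rw [getLast_cons_of_ne_nil (List.cons_ne_nil a l')]; exact hp.1.2⟩, ?_⟩, ?_⟩
        · rw [List.nodup_cons]
          refine ⟨fun hmem => hu ?_, hp.2⟩
          have := hsub u hmem
          simpa using this
        · intro x hx
          simp at hx
          rcases hx with rfl | hx
          · simp
          · have := hsub x (by simpa using hx)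
            simp at this ⊢
            tauto

lemma IsWalk.to_path {u v : V} {l : List V} (hw : IsWalk A u v l) :
    ∃ l', IsPath A u v l' ∧ ∀ x ∈ u :: l', x ∈ u :: l :=
  walk_to_path l.length l le_rfl u v hw

lemma dist_le_length {u v : V} {l : List V} (hw : IsWalk A u v l) : dist A u v ≤ l.length :=
  Nat.sInf_le ⟨l, hw, rfl⟩

lemma exists_walk_dist (hs : Strong A) (u v : V) :
    ∃ l, IsWalk A u v l ∧ l.length = dist A u v := by
  have hne : {n | ∃ l, IsWalk A u v l ∧ l.length = n}.Nonempty := by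
    obtain ⟨l, hl⟩ := hs u v
    exact ⟨l.length, l, hl, rfl⟩
  exact Nat.sInf_mem hne

lemma dist_triangle (hs : Strong A) (u v w : V) :
    dist A u w ≤ dist A u v + dist A v w := by
  obtain ⟨l1, h1, e1⟩ := exists_walk_dist hs u v
  obtain ⟨l2, h2, e2⟩ := exists_walk_dist hs v w
  calc dist A u w ≤ (l1 ++ l2).length := dist_le_length (h1.append h2)
    _ = _ := by simp [e1, e2]

lemma dist_le_succ_of_arc_right (hs : Strong A) {u v w : V} (h : A v w) :
    dist A u w ≤ dist A u v + 1 := by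
  obtain ⟨l1, h1, e1⟩ := exists_walk_dist hs u v
  calc dist A u w ≤ (l1 ++ [w]).length := dist_le_length (h1.append (isWalk_single h))
    _ = _ := by simp [e1]

lemma dist_le_succ_of_arc_left (hs : Strong A) {u v w : V} (h : A u v) :
    dist A u w ≤ 1 + dist A v w := by
  obtain ⟨l1, h1, e1⟩ := exists_walk_dist hs v w
  calc dist A u w ≤ (([v] ++ l1)).length := dist_le_length ((isWalk_single h).append h1)
    _ = _ := by simp [e1, Nat.add_comm]

lemma dist_le_card [Fintype V] (hs : Strong A) (u v : V) :
    dist A u v + 1 ≤ Fintype.card V := by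
  classical
  obtain ⟨l, hw⟩ := hs u v
  obtain ⟨l', hp, _⟩ := hw.to_path
  have h1 : dist A u v ≤ l'.length := dist_le_length hp.1
  have h2 : (u :: l').length ≤ Fintype.card V := by
    simpa using List.Nodup.length_le_card hp.2
  simp at h2
  omega

lemma exists_dist_eq_diam [Fintype V] [Nonempty V] (hs : Strong A) :
    ∃ u v : V, dist A u v = diam A := by
  have hne : {d | ∃ u v : V, dist A u v = d}.Nonempty := by
    obtain ⟨u⟩ := ‹Nonempty V›
    exact ⟨dist A u u, u, u, rfl⟩
  have hbdd : BddAbove {d | ∃ u v : V, dist A u v = d} := by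
    refine ⟨Fintype.card V, fun k hk => ?_⟩
    obtain ⟨u, v, rfl⟩ := hk
    have := dist_le_card hs u v
    omega
  exact Nat.sSup_mem hne hbdd

lemma tourn_total (ht : IsTournament A) {u v : V} (h : u ≠ v) : A u v ∨ A v u := by
  by_cases h1 : A u v
  · exact Or.inl h1
  · exact Or.inr (((ht.2 v u h.symm).2) (by simpa using h1))

/-- gap rule from a source x0 -/
lemma arc_of_gap_from (ht : IsTournament A) (hs : Strong A) {x0 v w : V}
    (hne : v ≠ w) (hgap : dist A x0 w + 2 ≤ dist A x0 v) : A v w := by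
  rcases tourn_total ht hne with h | h
  · exact h
  · exact absurd (dist_le_succ_of_arc_right hs (u := x0) h) (by omega)

/-- gap rule toward a sink xd -/
lemma arc_of_gap_to (ht : IsTournament A) (hs : Strong A) {xd v w : V}
    (hne : w ≠ v) (hgap : dist A w xd + 2 ≤ dist A v xd) : A w v := by
  rcases tourn_total ht hne with h | h
  · exact h
  · exact absurd (dist_le_succ_of_arc_left hs (w := xd) h) (by omega)

lemma two_class_count [Fintype V] {Γ : V → ℕ} {c c' : ℕ} (hcc : c ≠ c')
    {l1 l2 : List V} (h1 : l1.Nodup) (h2 : l2.Nodup)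
    (hc1 : ∀ x ∈ l1, Γ x = c) (hc2 : ∀ x ∈ l2, Γ x = c') :
    l1.length + l2.length ≤ Fintype.card V := by
  classical
  have hdisj : Disjoint l1.toFinset l2.toFinset := by
    rw [Finset.disjoint_left]
    intro a ha hb
    rw [List.mem_toFinset] at ha hb
    exact hcc ((hc1 a ha).symm.trans (hc2 a hb))
  calc l1.length + l2.length = l1.toFinset.card + l2.toFinset.card := by
        rw [List.toFinset_card_of_nodup h1, List.toFinset_card_of_nodup h2]
    _ = (l1.toFinset ∪ l2.toFinset).card := (Finset.card_union_of_disjoint hdisj).symm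
    _ ≤ Fintype.card V := Finset.card_le_univ _

lemma class_count [Fintype V] [Nonempty V] (Γ : V → ℕ) (c : ℕ) :
    {x | Γ x = c}.ncard + (colorCount Γ - 1) ≤ Fintype.card V := by
  classical
  set C := {x | Γ x = c} with hC
  have hsum : C.ncard + Cᶜ.ncard = Fintype.card V := by
    have := Set.ncard_add_ncard_compl C
    simpa [Set.ncard_univ] using this
  have hrange : (Set.range Γ \ {c}).ncard ≤ Cᶜ.ncard := by
    refine Set.ncard_le_ncard_of_injOn
      (fun e => if h : ∃ x, Γ x = e then h.choose else Classical.arbitrary V) ?_ ?_ (Set.toFinite _)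
    · rintro e ⟨⟨x, rfl⟩, hec⟩
      rw [dif_pos ⟨x, rfl⟩]
      have : Γ (Exists.choose (⟨x, rfl⟩ : ∃ y, Γ y = Γ x)) = Γ x := Exists.choose_spec (⟨x, rfl⟩ : ∃ y, Γ y = Γ x)
      simp only [Set.mem_compl_iff, hC, Set.mem_setOf_eq, this]
      simpa using hec
    · rintro e1 ⟨⟨x1, rfl⟩, _⟩ e2 ⟨⟨x2, rfl⟩, _⟩ heq
      dsimp only at heq
      rw [dif_pos ⟨x1, rfl⟩, dif_pos ⟨x2, rfl⟩] at heq
      have g1 : Γ (Exists.choose (⟨x1, rfl⟩ : ∃ y, Γ y = Γ x1)) = Γ x1 := Exists.choose_spec (⟨x1, rfl⟩ : ∃ y, Γ y = Γ x1)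
      have g2 : Γ (Exists.choose (⟨x2, rfl⟩ : ∃ y, Γ y = Γ x2)) = Γ x2 := Exists.choose_spec (⟨x2, rfl⟩ : ∃ y, Γ y = Γ x2)
      rw [← g1, ← g2, heq]
  have hsub : colorCount Γ ≤ (Set.range Γ \ {c}).ncard + 1 := by
    have : Set.range Γ ⊆ (Set.range Γ \ {c}) ∪ {c} := by
      intro x hx
      by_cases h : x = c <;> simp [h, hx]
    calc colorCount Γ ≤ ((Set.range Γ \ {c}) ∪ {c}).ncard :=
          Set.ncard_le_ncard this (Set.Finite.union (Set.toFinite _) (Set.toFinite _))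
      _ ≤ (Set.range Γ \ {c}).ncard + ({c} : Set ℕ).ncard := Set.ncard_union_le _ _
      _ = _ := by simp
  omega

lemma mem_dropLast_or_getLast {l : List V} (hl : l ≠ []) {x : V} (hx : x ∈ l) :
    x ∈ l.dropLast ∨ x = l.getLast hl := by
  have := List.dropLast_append_getLast hl
  rw [← this] at hx
  rcases List.mem_append.1 hx with h | h
  · exact Or.inl h
  · simp at h; exact Or.inr h

theorem key_class [Fintype V] (ht : IsTournament A) (hs : Strong A) {x0 xd : V} {d : ℕ}
    (hdist : dist A x0 xd = d) (hd6 : 6 ≤ d) (hn : Fintype.card V ≤ 2 * d - 6)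
    (Γ : V → ℕ) (hΓ : IsSVMC A Γ) :
    ∃ c : ℕ, (let C := {x | Γ x = c};
      C.Nonempty ∧ StrongOn A C ∧ Absorbing A C ∧ Dominating A C) := by
  classical
  obtain ⟨lQ, hQp, cQ, hcQ⟩ := hΓ x0 xd
  have hlenQ : d ≤ lQ.length := hdist ▸ dist_le_length hQp.1
  have hQnil : lQ ≠ [] := by intro h; rw [h] at hlenQ; simp at hlenQ; omega
  have hintQlen : lQ.dropLast.length = lQ.length - 1 := List.length_dropLast (xs := lQ)
  have hintQnil : lQ.dropLast ≠ [] := by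
    intro h; rw [h] at hintQlen; simp at hintQlen; omega
  have hintQnodup : lQ.dropLast.Nodup :=
    ((List.dropLast_sublist lQ).nodup (hQp.2.of_cons))
  set c := cQ with hc
  -- key mono lemma : any SVMC-path of length ≥ d-2 has internal color c
  have mono_c : ∀ (u' v' : V) (lR : List V), IsPath A u' v' lR → d - 2 ≤ lR.length →
      MonoInternal Γ lR → ∀ x ∈ lR.dropLast, Γ x = c := by
    intro u' v' lR hRp hRlen ⟨c', hc'⟩
    have hintRlen : lR.dropLast.length = lR.length - 1 := List.length_dropLast (xs := lR)
    have hintRnil : lR.dropLast ≠ [] := by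
      intro h; rw [h] at hintRlen; simp at hintRlen; omega
    by_cases hcc : c' = c
    · subst hcc; exact hc'
    · exfalso
      have hintRnodup : lR.dropLast.Nodup :=
        ((List.dropLast_sublist lR).nodup (hRp.2.of_cons))
      have := two_class_count (Γ := Γ) (Ne.symm hcc) hintQnodup hintRnodup hcQ hc'
      omega
  -- key vertices
  set w1 := lQ.head hQnil with hw1
  set wlast := lQ.dropLast.getLast hintQnil with hwlast
  have hw1mem : w1 ∈ lQ.dropLast := by
    rw [hw1, ← List.head_dropLast hintQnil]
    exact List.head_mem hintQnil
  have hw1c : Γ w1 = c := hcQ _ hw1mem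
  have hwlc : Γ wlast = c := hcQ _ (List.getLast_mem hintQnil)
  have harc01 : A x0 w1 := hQp.1.head_arc hQnil
  have hdw1 : dist A x0 w1 ≤ 1 := dist_le_length (isWalk_single harc01)
  have harcld : A wlast xd := by
    have := hQp.1.secondLast_arc hQnil
    rwa [getLast_cons_of_ne_nil hintQnil] at this
  have hdwl : dist A wlast xd ≤ 1 := dist_le_length (isWalk_single harcld)
  -- the central walk w1 -> wlast within class c
  have hQwalk : ∃ l, IsWalk A w1 wlast l ∧ ∀ x ∈ w1 :: l, Γ x = c := by
    refine ⟨lQ.dropLast.tail, ?_, ?_⟩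
    · have h1 := hQp.1.dropLast hintQnil
      have h2 := h1.tail hintQnil
      rwa [List.head_dropLast hintQnil, ← hw1, ← hwlast] at h2
    · intro x hx
      apply hcQ
      have : w1 :: lQ.dropLast.tail = lQ.dropLast := by
        rw [hw1, ← List.head_dropLast hintQnil]
        exact List.cons_head_tail _
      rwa [this] at hx
  -- triangle bound
  have htri : ∀ v, d ≤ dist A x0 v + dist A v xd := by
    intro v; rw [← hdist]; exact dist_triangle hs x0 v xd
  -- absorbing claim
  have habs : ∀ v : V, ∃ w, Γ w = c ∧ A v w := by
    intro v
    by_cases hb : 3 ≤ dist A x0 v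
    · refine ⟨w1, hw1c, arc_of_gap_from ht hs (x0 := x0) ?_ (by omega)⟩
      intro h; rw [h] at hb; omega
    · have hvd : d - 2 ≤ dist A v xd := by have := htri v; omega
      obtain ⟨lR, hRp, hRm⟩ := hΓ v xd
      have hRlen : d - 2 ≤ lR.length := le_trans hvd (dist_le_length hRp.1)
      have hRc := mono_c v xd lR hRp hRlen hRm
      have hRnil : lR ≠ [] := by intro h; rw [h] at hRlen; simp at hRlen; omega
      have hRdnil : lR.dropLast ≠ [] := by
        intro h
        have h2 := List.length_dropLast (xs := lR)
        rw [h] at h2; simp at h2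
        omega
      refine ⟨lR.head hRnil, ?_, hRp.1.head_arc hRnil⟩
      apply hRc
      rw [← List.head_dropLast hRdnil]
      exact List.head_mem hRdnil
  -- dominating claim
  have hdom : ∀ v : V, ∃ w, Γ w = c ∧ A w v := by
    intro v
    by_cases hb : 3 ≤ dist A v xd
    · refine ⟨wlast, hwlc, arc_of_gap_to ht hs (xd := xd) ?_ (by omega)⟩
      intro h; rw [← h] at hb; omega
    · have hvd : d - 2 ≤ dist A x0 v := by have := htri v; omega
      obtain ⟨lR, hRp, hRm⟩ := hΓ x0 v
      have hRlen : d - 2 ≤ lR.length := le_trans hvd (dist_le_length hRp.1)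
      have hRc := mono_c x0 v lR hRp hRlen hRm
      have hRnil : lR ≠ [] := by intro h; rw [h] at hRlen; simp at hRlen; omega
      have hRdnil : lR.dropLast ≠ [] := by
        intro h
        have h2 := List.length_dropLast (xs := lR)
        rw [h] at h2; simp at h2
        omega
      refine ⟨lR.dropLast.getLast hRdnil, hRc _ (List.getLast_mem hRdnil), ?_⟩
      have := hRp.1.secondLast_arc hRnil
      rwa [getLast_cons_of_ne_nil hRdnil] at this
  -- reach w1 within class
  have hreach : ∀ v : V, Γ v = c → ∃ l, IsWalk A v w1 l ∧ ∀ x ∈ v :: l, Γ x = c := by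
    intro v hv
    by_cases hvw : v = w1
    · subst hvw; exact ⟨[], isWalk_nil, by simpa using hv⟩
    by_cases hb : 3 ≤ dist A x0 v
    · refine ⟨[w1], isWalk_single (arc_of_gap_from ht hs (x0 := x0) hvw (by omega)), ?_⟩
      intro x hx; simp at hx
      rcases hx with rfl | rfl
      · exact hv
      · exact hw1c
    · have hvd : d - 2 ≤ dist A v xd := by have := htri v; omega
      obtain ⟨lR, hRp, hRm⟩ := hΓ v xd
      have hRlen : d - 2 ≤ lR.length := le_trans hvd (dist_le_length hRp.1)
      have hRc := mono_c v xd lR hRp hRlen hRm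
      have hRnil : lR ≠ [] := by intro h; rw [h] at hRlen; simp at hRlen; omega
      have hRdnil : lR.dropLast ≠ [] := by
        intro h
        have h2 := List.length_dropLast (xs := lR)
        rw [h] at h2; simp at h2
        omega
      set wR := lR.dropLast.getLast hRdnil with hwR
      have hwalk1 : IsWalk A v wR lR.dropLast := hRp.1.dropLast hRdnil
      have hwRc : Γ wR = c := hRc _ (List.getLast_mem hRdnil)
      have harcR : A wR xd := by
        have := hRp.1.secondLast_arc hRnil
        rwa [getLast_cons_of_ne_nil hRdnil] at this
      have hdwR : dist A wR xd ≤ 1 := dist_le_length (isWalk_single harcR)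
      have hdx0wR : 3 ≤ dist A x0 wR := by have := htri wR; omega
      by_cases hwRw1 : wR = w1
      · refine ⟨lR.dropLast, by rwa [hwRw1] at hwalk1, ?_⟩
        intro x hx; simp at hx
        rcases hx with rfl | hx
        · exact hv
        · exact hRc _ hx
      · refine ⟨lR.dropLast ++ [w1],
          hwalk1.append (isWalk_single (arc_of_gap_from ht hs (x0 := x0) hwRw1 (by omega))), ?_⟩
        intro x hx; simp at hx
        rcases hx with rfl | hx | rfl
        · exact hv
        · exact hRc _ hx
        · exact hw1c
  -- from w1 within class
  have hfrom : ∀ v : V, Γ v = c → ∃ l, IsWalk A w1 v l ∧ ∀ x ∈ w1 :: l, Γ x = c := by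
    intro v hv
    obtain ⟨lC, hlC, hlCc⟩ := hQwalk
    by_cases hvw : v = wlast
    · subst hvw; exact ⟨lC, hlC, hlCc⟩
    by_cases hb : 3 ≤ dist A v xd
    · refine ⟨lC ++ [v], hlC.append (isWalk_single (arc_of_gap_to ht hs (xd := xd) ?_ (by omega))), ?_⟩
      · intro h; exact hvw h.symm
      · intro x hx
        rcases List.mem_cons.1 hx with rfl | hx
        · exact hlCc _ (by simp)
        · rcases List.mem_append.1 hx with hx | hx
          · exact hlCc _ (by simp [hx])
          · simp at hx; subst hx; exact hv
    · have hvd : d - 2 ≤ dist A x0 v := by have := htri v; omega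
      obtain ⟨lR, hRp, hRm⟩ := hΓ x0 v
      have hRlen : d - 2 ≤ lR.length := le_trans hvd (dist_le_length hRp.1)
      have hRc := mono_c x0 v lR hRp hRlen hRm
      have hRnil : lR ≠ [] := by intro h; rw [h] at hRlen; simp at hRlen; omega
      have hRdnil : lR.dropLast ≠ [] := by
        intro h
        have h2 := List.length_dropLast (xs := lR)
        rw [h] at h2; simp at h2
        omega
      set r1 := lR.head hRnil with hr1
      have har1 : A x0 r1 := hRp.1.head_arc hRnil
      have hdr1 : dist A x0 r1 ≤ 1 := dist_le_length (isWalk_single har1)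
      have hdr1d : 3 ≤ dist A r1 xd := by have := htri r1; omega
      have hr1c : Γ r1 = c := by
        apply hRc
        rw [hr1, ← List.head_dropLast hRdnil]
        exact List.head_mem hRdnil
      have htail : IsWalk A r1 v lR.tail := hRp.1.tail hRnil
      have hlRgetLast : lR.getLast hRnil = v := by
        rw [← hRp.1.2, getLast_cons_of_ne_nil hRnil]
      have htailc : ∀ x ∈ r1 :: lR.tail, Γ x = c := by
        intro x hx
        rw [hr1, List.cons_head_tail] at hx
        rcases mem_dropLast_or_getLast hRnil hx with h | h
        · exact hRc _ h
        · rw [h, hlRgetLast]; exact hv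
      -- walk w1 -> r1
      have hw1r1 : ∃ l, IsWalk A w1 r1 l ∧ ∀ x ∈ w1 :: l, Γ x = c := by
        by_cases hrw : r1 = wlast
        · exact ⟨lC, by rwa [← hrw] at hlC, hlCc⟩
        · refine ⟨lC ++ [r1], hlC.append (isWalk_single (arc_of_gap_to ht hs (xd := xd) ?_ (by omega))), ?_⟩
          · intro h; exact hrw h.symm
          · intro x hx
            rcases List.mem_cons.1 hx with rfl | hx
            · exact hlCc _ (by simp)
            · rcases List.mem_append.1 hx with hx | hx
              · exact hlCc _ (by simp [hx])
              · simp at hx; subst hx; exact hr1c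
      obtain ⟨l1, hl1, hl1c⟩ := hw1r1
      refine ⟨l1 ++ lR.tail, hl1.append htail, ?_⟩
      intro x hx
      rcases List.mem_cons.1 hx with rfl | hx
      · exact hl1c _ (by simp)
      · rcases List.mem_append.1 hx with hx | hx
        · exact hl1c _ (by simp [hx])
        · exact htailc _ (by simp [hx])
  -- assemble
  refine ⟨c, ⟨w1, hw1c⟩, ?_, ?_, ?_⟩
  · intro u hu v hv
    obtain ⟨l1, hl1, hl1c⟩ := hreach u hu
    obtain ⟨l2, hl2, hl2c⟩ := hfrom v hv
    refine ⟨l1 ++ l2, hl1.append hl2, ?_⟩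
    intro x hx
    rcases List.mem_cons.1 hx with rfl | hx
    · exact hl1c _ (by simp)
    · rcases List.mem_append.1 hx with hx | hx
      · exact hl1c _ (by simp [hx])
      · exact hl2c _ (by simp [hx])
  · intro v _
    obtain ⟨w, hw, ha⟩ := habs v
    exact ⟨w, hw, ha⟩
  · intro v _
    obtain ⟨w, hw, ha⟩ := hdom v
    exact ⟨w, hw, ha⟩

lemma dist_self (u : V) : dist A u u = 0 :=
  Nat.le_zero.1 (by simpa using dist_le_length (A := A) (isWalk_nil (u := u)))

lemma svmc_coloring [Fintype V] (hs : Strong A) {S : Set V} (hSne : S.Nonempty)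
    (hstr : StrongOn A S) (habs : Absorbing A S) (hdom : Dominating A S) :
    ∃ Γ : V → ℕ, IsSVMC A Γ ∧ colorCount Γ = Fintype.card V - S.ncard + 1 := by
  classical
  set f : V → ℕ := fun v => ((Fintype.equivFin V) v : ℕ) with hf
  have hfinj : Function.Injective f := fun a b h => by
    apply (Fintype.equivFin V).injective
    exact Fin.ext h
  set Γ : V → ℕ := fun v => if v ∈ S then 0 else f v + 1 with hΓdef
  have hΓS : ∀ v ∈ S, Γ v = 0 := fun v hv => by simp [hΓdef, hv]
  refine ⟨Γ, ?_, ?_⟩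
  · -- IsSVMC
    intro u v
    -- build a walk from u to v with all vertices in S ∪ {u, v}
    have hwalk : ∃ l, IsWalk A u v l ∧ ∀ x ∈ u :: l, x ∈ S ∪ {u, v} := by
      by_cases huv : u = v
      · subst huv; exact ⟨[], isWalk_nil, by simp⟩
      obtain ⟨s, hsS, hw1, hl1⟩ : ∃ s, s ∈ S ∧ IsWalk A u s (if u ∈ S then [] else [s]) ∧
          (∀ x ∈ (if u ∈ S then [] else [s]), x ∈ S) := by
        by_cases hu : u ∈ S
        · exact ⟨u, hu, by simp [hu, isWalk_nil], by simp [hu]⟩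
        · obtain ⟨s, hsS, harc⟩ := habs u hu
          exact ⟨s, hsS, by simp [hu, isWalk_single harc], by simpa [hu] using hsS⟩
      obtain ⟨t, htS, hw2, hl2⟩ : ∃ t, t ∈ S ∧ IsWalk A t v (if v ∈ S then [] else [v]) ∧ True := by
        by_cases hv : v ∈ S
        · exact ⟨v, hv, by simp [hv, isWalk_nil], trivial⟩
        · obtain ⟨t, htS, harc⟩ := hdom v hv
          exact ⟨t, htS, by simp [hv, isWalk_single harc], trivial⟩
      obtain ⟨lS, hlS⟩ := hstr s hsS t htS
      refine ⟨(if u ∈ S then [] else [s]) ++ lS ++ (if v ∈ S then [] else [v]),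
        (hw1.append hlS.1).append hw2, ?_⟩
      intro x hx
      rcases List.mem_cons.1 hx with rfl | hx
      · simp
      rcases List.mem_append.1 hx with hx | hx
      · rcases List.mem_append.1 hx with hx | hx
        · exact Or.inl (hl1 x hx)
        · exact Or.inl (hlS.2 x (List.mem_cons_of_mem s hx))
      · by_cases hv : v ∈ S
        · simp [hv] at hx
        · simp [hv] at hx; simp [hx]
    obtain ⟨l, hw, hmem⟩ := hwalk
    obtain ⟨l', hp, hsub⟩ := hw.to_path
    refine ⟨l', hp, 0, ?_⟩
    intro x hx
    have hxl : x ∈ l' := List.mem_of_mem_dropLast hx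
    have hxne_u : x ≠ u := by
      intro h; subst h
      exact (List.nodup_cons.1 hp.2).1 hxl
    have hxne_v : x ≠ v := by
      intro h
      have hlne : l' ≠ [] := by rintro rfl; simp at hxl
      have hgl : l'.getLast hlne = v := by
        rw [← hp.1.2, getLast_cons_of_ne_nil hlne]
      have hnd : l'.Nodup := (List.nodup_cons.1 hp.2).2
      have hdg := List.dropLast_append_getLast hlne
      rw [← hdg] at hnd
      have hdisj := List.disjoint_of_nodup_append hnd
      exact hdisj hx (by simp [hgl, h])
    have := hmem x (hsub x (List.mem_cons_of_mem u hxl))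
    rcases this with h | h
    · exact hΓS x h
    · simp at h
      rcases h with rfl | rfl
      · exact absurd rfl hxne_u
      · exact absurd rfl hxne_v
  · -- colorCount
    have hrange : Set.range Γ = insert 0 ((fun v => f v + 1) '' Sᶜ) := by
      ext e
      constructor
      · rintro ⟨x, rfl⟩
        by_cases hx : x ∈ S
        · simp [hΓdef, hx]
        · exact Or.inr ⟨x, hx, by simp [hΓdef, hx]⟩
      · rintro (rfl | ⟨x, hx, rfl⟩)
        · obtain ⟨s, hsS⟩ := hSne
          exact ⟨s, hΓS s hsS⟩
        · exact ⟨x, by simp [hΓdef]; intro hc; exact absurd hc hx⟩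
    have h0 : (0 : ℕ) ∉ (fun v => f v + 1) '' Sᶜ := by
      rintro ⟨x, _, hx⟩; simp at hx
    have himg : ((fun v => f v + 1) '' Sᶜ).ncard = Sᶜ.ncard :=
      Set.ncard_image_of_injective _ (fun a b h => hfinj (by omega))
    have hsum : S.ncard + Sᶜ.ncard = Fintype.card V := by
      have := Set.ncard_add_ncard_compl S
      simpa [Set.ncard_univ] using this
    have hSle : S.ncard ≤ Fintype.card V := by omega
    rw [colorCount, hrange, Set.ncard_insert_of_notMem h0 (Set.toFinite _), himg]
    omega


end SVMC

open SVMC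

/-- a strong tournament `T` of order `n` with diameter `d ≥ 6`
and `Ω(T) ≤ 2d - 6` satisfies `smc_v(T) = n - Ω_v(T) + 1`. -/
theorem smcv_tournament {V : Type*} [Fintype V] (A : V → V → Prop) (d : ℕ)
    (htour : SVMC.IsTournament A) (hstrong : SVMC.Strong A)
    (hd : SVMC.diam A = d) (hd6 : 6 ≤ d) (hΩ : SVMC.Omega A ≤ 2 * d - 6) :
    SVMC.smcv A = Fintype.card V - SVMC.Omegav A + 1 := by
  classical
  -- V is nonempty
  have hVne : Nonempty V := by
    by_contra h
    rw [not_nonempty_iff] at h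
    have : {e | ∃ u v : V, dist A u v = e} = ∅ := by
      ext e; simp only [Set.mem_setOf_eq, Set.mem_empty_iff_false, iff_false]
      rintro ⟨u, -⟩
      exact h.elim u
    rw [diam, this, csSup_empty] at hd
    simp at hd
    omega
  -- diameter pair
  obtain ⟨x0, xd, hdist⟩ := exists_dist_eq_diam hstrong
  rw [hd] at hdist
  have hx0xd : x0 ≠ xd := by
    intro h
    rw [h, dist_self] at hdist
    omega
  -- card bound: n ≤ 2d - 6
  have homega_ge : Fintype.card V ≤ Omega A := by
    have hne : {k | ∃ B : V → V → Prop, (∀ u v, B u v → A u v) ∧ Strong B ∧ arcCount B = k}.Nonempty :=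
      ⟨arcCount A, A, fun _ _ h => h, hstrong, rfl⟩
    obtain ⟨B, hBsub, hBs, hBcount⟩ := Nat.sInf_mem hne
    rw [Omega, ← hBcount]
    -- injection u ↦ (u, head of a walk to a different vertex)
    have hpick : ∀ u : V, ∃ w : V, B u w := by
      intro u
      obtain ⟨l, hl⟩ := hBs u (if u = x0 then xd else x0)
      have hlne : l ≠ [] := by
        rintro rfl
        have := hl.eq_of_nil
        by_cases h : u = x0 <;> simp [h] at this <;> exact hx0xd (by rw [← this]; try rw [h])
      exact ⟨l.head hlne, hl.head_arc hlne⟩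
    have : Fintype.card V = (Set.univ : Set V).ncard := by simp [Set.ncard_univ]
    rw [this, arcCount]
    refine Set.ncard_le_ncard_of_injOn (fun u => (u, (hpick u).choose)) ?_ ?_ (Set.toFinite _)
    · intro u _
      exact (hpick u).choose_spec
    · intro a _ b _ h
      simpa using congrArg Prod.fst h
  have hn : Fintype.card V ≤ 2 * d - 6 := le_trans homega_ge hΩ
  -- Omegav is attained
  have hOmegavne : {k | ∃ S : Set V, S.Nonempty ∧ StrongOn A S ∧ Absorbing A S ∧
      Dominating A S ∧ S.ncard = k}.Nonempty := by
    refine ⟨(Set.univ : Set V).ncard, Set.univ, Set.univ_nonempty, ?_, ?_, ?_, rfl⟩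
    · intro u _ v _
      obtain ⟨l, hl⟩ := hstrong u v
      exact ⟨l, hl, fun x _ => Set.mem_univ x⟩
    · intro v hv; exact absurd (Set.mem_univ v) hv
    · intro v hv; exact absurd (Set.mem_univ v) hv
  obtain ⟨S, hSne, hSstr, hSabs, hSdom, hScard⟩ := Nat.sInf_mem hOmegavne
  have hScard' : S.ncard = Omegav A := hScard
  have hSle : S.ncard ≤ Fintype.card V := by
    have := Set.ncard_le_ncard (Set.subset_univ S) (Set.toFinite _)
    simpa [Set.ncard_univ] using this
  -- upper bound for every achievable k
  have hub : ∀ k ∈ {k | ∃ Γ : V → ℕ, IsSVMC A Γ ∧ colorCount Γ = k},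
      k ≤ Fintype.card V - Omegav A + 1 := by
    rintro k ⟨Γ, hΓ, rfl⟩
    obtain ⟨c, hCne, hCstr, hCabs, hCdom⟩ := key_class htour hstrong hdist hd6 hn Γ hΓ
    have hωle : Omegav A ≤ {x | Γ x = c}.ncard :=
      Nat.sInf_le ⟨{x | Γ x = c}, hCne, hCstr, hCabs, hCdom, rfl⟩
    have hcount := class_count Γ c
    have hkpos : 1 ≤ colorCount Γ := by
      rw [colorCount]
      rw [Nat.one_le_iff_ne_zero]
      intro h
      rw [Set.ncard_eq_zero (Set.toFinite _)] at h
      exact Set.range_nonempty Γ |>.ne_empty h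
    omega
  -- the value is attained
  have hmem : Fintype.card V - Omegav A + 1 ∈
      {k | ∃ Γ : V → ℕ, IsSVMC A Γ ∧ colorCount Γ = k} := by
    obtain ⟨Γ, hΓ, hcount⟩ := svmc_coloring hstrong hSne hSstr hSabs hSdom
    exact ⟨Γ, hΓ, by rw [hcount, hScard']⟩
  rw [smcv]
  apply le_antisymm
  · exact csSup_le ⟨_, hmem⟩ hub
  · exact le_csSup ⟨Fintype.card V - Omegav A + 1, fun k hk => hub k hk⟩ hmem
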